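/- arXiv:1707.00615 — 6 statements merged into one kernel-verified Lean document; each statement's English description precedes it below -/
import Mathlib

section
/- Let M be an atom-free MVS and {X_i : i = 1,...,n} a finite family of M-metrizable topological spaces. Then the product space X = X_1 × ... × X_n is M-metrizable; specifically, f(x,y) = Σ_{i=1}^n f_i(x_i,y_i) is a quasimetric function inducing the product topology, where each f_i induces the topology of X_i. -/
universe u v w

structure MVS (M : Type u) where
  add : M → M → M
  e : M
  assoc : ∀ a b c : M, add (add a b) c = add a (add b c)
  add_e : ∀ a : M, add a e = a
  e_add : ∀ a : M, add e a = a
  eq_e_of_add_eq_e : ∀ a b : M, add a b = e → a = e ∧ b = e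
  exists_common : ∀ a b : M, a ≠ e → b ≠ e →
    ∃ c, c ≠ e ∧ (∃ d, add c d = a) ∧ (∃ d, add c d = b)
  nontrivial : ∃ a : M, a ≠ e

variable {M : Type u} {X : Type v}

/-- `a ⊴ b` iff there is `c` with `a + c = b`. -/
def MVS.le (S : MVS M) (a b : M) : Prop := ∃ c, S.add a c = b

/-- `a ◁ b` iff there is `c ≠ e` with `a + c = b`. -/
def MVS.lt (S : MVS M) (a b : M) : Prop := ∃ c, c ≠ S.e ∧ S.add a c = b

def MVS.Commutative (S : MVS M) : Prop := ∀ a b, S.add a b = S.add b a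

/-- An MVS is atom-free if it is commutative and every `m ≠ e` admits `n ≠ e` with `n ◁ m`. -/
def MVS.AtomFree (S : MVS M) : Prop :=
  S.Commutative ∧ ∀ m, m ≠ S.e → ∃ n, n ≠ S.e ∧ S.lt n m

/-- A quasimetric function: triangle inequality and `f x x = e`. -/
def IsQuasimetric (S : MVS M) (f : X → X → M) : Prop :=
  (∀ x y z, S.le (f x z) (S.add (f x y) (f y z))) ∧ ∀ x, f x x = S.e

/-- Open ball `B_f(x,m) = {y | f x y ◁ m}`. -/
def ball (S : MVS M) (f : X → X → M) (x : X) (m : M) : Set X := {y | S.lt (f x y) m}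

/-- Closed ball `B̄_f(x,m) = {y | f x y ⊴ m}`. -/
def closedBall (S : MVS M) (f : X → X → M) (x : X) (m : M) : Set X := {y | S.le (f x y) m}

/-- The topology induced by a quasimetric function: open balls form a neighbourhood base. -/
def qTopology (S : MVS M) (f : X → X → M) : TopologicalSpace X :=
  TopologicalSpace.mkOfNhds fun x => ⨅ m ∈ {m : M | m ≠ S.e}, Filter.principal (ball S f x m)

/-- Entourage `U_m = {(x,y) | f x y ⊴ m}`. -/
def ent (S : MVS M) (f : X → X → M) (m : M) : Set (X × X) := {p | S.le (f p.1 p.2) m}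

/-- `qcomp A B = A ∘ B = {(x,z) | ∃ y, (x,y) ∈ B ∧ (y,z) ∈ A}`. -/
def qcomp (A B : Set (X × X)) : Set (X × X) := {p | ∃ y, (p.1, y) ∈ B ∧ (y, p.2) ∈ A}

def IsQuasiUniformity (U : Set (Set (X × X))) : Prop :=
  U.Nonempty ∧
  (∀ u ∈ U, ∀ x : X, (x, x) ∈ u) ∧
  (∀ u ∈ U, ∀ v : Set (X × X), u ⊆ v → v ∈ U) ∧
  (∀ u ∈ U, ∀ v ∈ U, u ∩ v ∈ U) ∧
  (∀ u ∈ U, ∃ v ∈ U, qcomp v v ⊆ u)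

def IsBaseOf (B U : Set (Set (X × X))) : Prop := B ⊆ U ∧ ∀ u ∈ U, ∃ b ∈ B, b ⊆ u

/-- `U + V` : the intersection of all entourages `U_n` containing `V ∘ U`. -/
def addEnt (S : MVS M) (f : X → X → M) (A B : Set (X × X)) : Set (X × X) :=
  ⋂₀ {w | (∃ m, ent S f m = w) ∧ qcomp B A ⊆ w}

/-- The topology induced by a base of a quasiuniformity: sections `U[x]` form a
neighbourhood base. -/
def quTopology (B : Set (Set (X × X))) : TopologicalSpace X :=
  TopologicalSpace.mkOfNhds fun x => ⨅ u ∈ B, Filter.principal {y | (x, y) ∈ u}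

/-- `n`-fold sum `m + ⋯ + m`. -/
def nfold (S : MVS M) : ℕ → M → M
  | 0, _ => S.e
  | Nat.succ n, m => S.add m (nfold S n m)

-- AUX
namespace MVS
variable (S : MVS M)

lemma le_refl' (a : M) : S.le a a := ⟨S.e, S.add_e a⟩

lemma le_trans' {a b c : M} (h1 : S.le a b) (h2 : S.le b c) : S.le a c := by
  obtain ⟨p, rfl⟩ := h1; obtain ⟨q, rfl⟩ := h2; exact ⟨S.add p q, (S.assoc ..).symm⟩

lemma le_of_lt' {a b : M} (h : S.lt a b) : S.le a b := ⟨h.choose, h.choose_spec.2⟩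

lemma lt_of_le_of_lt' {a b c : M} (h1 : S.le a b) (h2 : S.lt b c) : S.lt a c := by
  obtain ⟨p, rfl⟩ := h1; obtain ⟨q, hq, rfl⟩ := h2
  refine ⟨S.add p q, fun h => hq (S.eq_e_of_add_eq_e _ _ h).2, (S.assoc ..).symm⟩

lemma lt_of_lt_of_le' {a b c : M} (h1 : S.lt a b) (h2 : S.le b c) : S.lt a c := by
  obtain ⟨p, hp, rfl⟩ := h1; obtain ⟨q, rfl⟩ := h2
  refine ⟨S.add p q, fun h => hp (S.eq_e_of_add_eq_e _ _ h).1, (S.assoc ..).symm⟩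

lemma e_lt' {m : M} (hm : m ≠ S.e) : S.lt S.e m := ⟨m, hm, S.e_add m⟩

lemma add_add_add' (hc : S.Commutative) (a b c d : M) :
    S.add (S.add a b) (S.add c d) = S.add (S.add a c) (S.add b d) := by
  rw [S.assoc, ← S.assoc b c d, hc b c, S.assoc c b d, ← S.assoc]

lemma add_le_add' (hc : S.Commutative) {a b c d : M} (h1 : S.le a b) (h2 : S.le c d) :
    S.le (S.add a c) (S.add b d) := by
  obtain ⟨p, rfl⟩ := h1; obtain ⟨q, rfl⟩ := h2
  exact ⟨S.add p q, S.add_add_add' hc a c p q⟩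

/-- `fsum S a = a 0 + (a 1 + ⋯ + e)`. -/
def fsum {k : ℕ} (a : Fin k → M) : M := (List.ofFn a).foldr S.add S.e

lemma fsum_zero (a : Fin 0 → M) : S.fsum a = S.e := rfl

lemma fsum_succ {k : ℕ} (a : Fin (k+1) → M) :
    S.fsum a = S.add (a 0) (S.fsum (fun i => a i.succ)) := by
  unfold fsum
  rw [List.ofFn_succ]
  rfl

lemma fsum_add (hc : S.Commutative) {k : ℕ} (a b : Fin k → M) :
    S.fsum (fun i => S.add (a i) (b i)) = S.add (S.fsum a) (S.fsum b) := by
  induction k with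
  | zero => simp [fsum_zero]; exact (S.add_e _).symm
  | succ k ih =>
    rw [S.fsum_succ, S.fsum_succ a, S.fsum_succ b, ih (fun i => a i.succ) (fun i => b i.succ),
      S.add_add_add' hc]

lemma fsum_le_fsum (hc : S.Commutative) {k : ℕ} (a b : Fin k → M)
    (h : ∀ i, S.le (a i) (b i)) : S.le (S.fsum a) (S.fsum b) := by
  induction k with
  | zero => exact S.le_refl' _
  | succ k ih =>
    rw [S.fsum_succ, S.fsum_succ b]
    exact S.add_le_add' hc (h 0) (ih _ _ fun i => h i.succ)

lemma le_fsum (hc : S.Commutative) {k : ℕ} (a : Fin k → M) (i : Fin k) :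
    S.le (a i) (S.fsum a) := by
  induction k with
  | zero => exact i.elim0
  | succ k ih =>
    rw [S.fsum_succ]
    refine Fin.cases ⟨_, rfl⟩ (fun j => ?_) i
    obtain ⟨p, hp⟩ := ih (fun i => a i.succ) j
    exact ⟨S.add p (a 0), by rw [← S.assoc, hp, hc]⟩

lemma split' (hAF : S.AtomFree) : ∀ (k : ℕ) (m : M), m ≠ S.e →
    ∃ (c : Fin k → M) (r : M), (∀ i, c i ≠ S.e) ∧ r ≠ S.e ∧ S.add (S.fsum c) r = m := by
  intro k
  induction k with
  | zero =>
    intro m hm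
    exact ⟨Fin.elim0, m, fun i => i.elim0, hm, S.e_add m⟩
  | succ k ih =>
    intro m hm
    obtain ⟨n₁, hn₁, k₁, hk₁, hsum⟩ := hAF.2 m hm
    obtain ⟨c, r, hc, hr, hcr⟩ := ih k₁ hk₁
    refine ⟨Fin.cons n₁ c, r, ?_, hr, ?_⟩
    · intro i
      refine Fin.cases (by simpa using hn₁) (fun j => by simpa using hc j) i
    · rw [S.fsum_succ]
      simp only [Fin.cons_zero, Fin.cons_succ]
      rw [S.assoc, hcr]; exact hsum

lemma common' : ∀ (k : ℕ) (m : Fin k → M), (∀ i, m i ≠ S.e) →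
    ∃ c, c ≠ S.e ∧ ∀ i, S.le c (m i) := by
  intro k
  induction k with
  | zero =>
    intro m _
    obtain ⟨a, ha⟩ := S.nontrivial
    exact ⟨a, ha, fun i => i.elim0⟩
  | succ k ih =>
    intro m hm
    obtain ⟨c', hc', hle⟩ := ih (fun i => m i.succ) (fun i => hm _)
    obtain ⟨c, hc, h0, hd⟩ := S.exists_common c' (m 0) hc' (hm 0)
    exact ⟨c, hc, fun i => Fin.cases hd (fun j => S.le_trans' h0 (hle j)) i⟩

end MVS

-- FILTER LAYER
open Filter in
lemma mem_nFilter (S : MVS M) (f : X → X → M) (x : X) (s : Set X) :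
    (s ∈ ⨅ m ∈ {m : M | m ≠ S.e}, Filter.principal (ball S f x m)) ↔
      ∃ m, m ≠ S.e ∧ ball S f x m ⊆ s := by
  rw [Filter.mem_biInf_of_directed]
  · simp only [Set.mem_setOf_eq, Filter.mem_principal, exists_prop]
  · rintro m1 hm1 m2 hm2
    obtain ⟨c, hc, h1, h2⟩ := S.exists_common m1 m2 hm1 hm2
    exact ⟨c, hc, Filter.principal_mono.2 fun y hy => S.lt_of_lt_of_le' hy h1,
      Filter.principal_mono.2 fun y hy => S.lt_of_lt_of_le' hy h2⟩
  · obtain ⟨a, ha⟩ := S.nontrivial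
    exact ⟨a, ha⟩

lemma nhds_qTopology (S : MVS M) (hAF : S.AtomFree) {Y : Type w} (g : Y → Y → M)
    (hg : IsQuasimetric S g) (x : Y) :
    @nhds Y (qTopology S g) x = ⨅ m ∈ {m : M | m ≠ S.e}, Filter.principal (ball S g x m) := by
  refine TopologicalSpace.nhds_mkOfNhds _ _ (fun a s hs => ?_) (fun a s hs => ?_)
  · obtain ⟨m, hm, hsub⟩ := (mem_nFilter S g a s).1 hs
    exact hsub (show S.lt (g a a) m by rw [hg.2]; exact S.e_lt' hm)
  · obtain ⟨m, hm, hsub⟩ := (mem_nFilter S g a s).1 hs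
    have hball : ball S g a m ∈ ⨅ m ∈ {m : M | m ≠ S.e}, Filter.principal (ball S g a m) :=
      (mem_nFilter S g a _).2 ⟨m, hm, subset_rfl⟩
    refine Filter.mem_of_superset hball fun y hy => ?_
    obtain ⟨k, hk, hky⟩ := hy
    obtain ⟨n', hn', k2, hk2, hnk⟩ := hAF.2 k hk
    refine (mem_nFilter S g y s).2 ⟨n', hn', fun z hz => hsub ?_⟩
    -- hz : S.lt (g y z) n'
    obtain ⟨p, hp, hpz⟩ := hz
    obtain ⟨q, hq⟩ := hg.1 a y z
    refine ⟨S.add q (S.add p k2), fun h => hp (S.eq_e_of_add_eq_e _ _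
      (S.eq_e_of_add_eq_e _ _ h).2).1, ?_⟩
    rw [← S.assoc, hq, S.assoc, ← S.assoc (g y z) p k2, hpz, hnk, hky]

lemma MVS.fsum_e (S : MVS M) {k : ℕ} (a : Fin k → M) (h : ∀ i, a i = S.e) :
    S.fsum a = S.e := by
  induction k with
  | zero => rfl
  | succ k ih => rw [S.fsum_succ, h 0, S.e_add]; exact ih _ fun i => h i.succ

theorem stmt_7 {n : ℕ} (S : MVS M) (hAF : S.AtomFree)
    {X : Fin n → Type v} (t : ∀ i, TopologicalSpace (X i))
    (f : ∀ i, X i → X i → M)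
    (hf : ∀ i, IsQuasimetric S (f i))
    (ht : ∀ i, qTopology S (f i) = t i) :
    IsQuasimetric S
      (fun x y : ∀ i, X i => (List.ofFn fun i => f i (x i) (y i)).foldr S.add S.e) ∧
    qTopology S
      (fun x y : ∀ i, X i => (List.ofFn fun i => f i (x i) (y i)).foldr S.add S.e) =
      @Pi.topologicalSpace (Fin n) X t := by
  have hc := hAF.1
  set g : (∀ i, X i) → (∀ i, X i) → M :=
    fun x y => (List.ofFn fun i => f i (x i) (y i)).foldr S.add S.e with hg_def
  have hgf : ∀ x y, g x y = S.fsum (fun i => f i (x i) (y i)) := fun _ _ => rfl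
  have hg : IsQuasimetric S g := by
    constructor
    · intro x y z
      rw [hgf, hgf, hgf, ← S.fsum_add hc]
      exact S.fsum_le_fsum hc _ _ fun i => (hf i).1 (x i) (y i) (z i)
    · intro x
      rw [hgf]
      exact S.fsum_e _ fun i => (hf i).2 (x i)
  refine ⟨hg, ?_⟩
  letI : ∀ i, TopologicalSpace (X i) := t
  refine TopologicalSpace.ext_nhds fun x => ?_
  rw [nhds_qTopology S hAF g hg x, nhds_pi]
  have hni : ∀ i, @nhds _ (t i) (x i) =
      ⨅ m ∈ {m : M | m ≠ S.e}, Filter.principal (ball S (f i) (x i) m) := by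
    intro i
    rw [← ht i]
    exact nhds_qTopology S hAF (f i) (hf i) (x i)
  refine Filter.ext fun s => ?_
  rw [mem_nFilter, Filter.mem_pi]
  constructor
  · rintro ⟨m, hm, hsub⟩
    obtain ⟨c, r, hce, hr, hcr⟩ := S.split' hAF n m hm
    refine ⟨Set.univ, Set.finite_univ, fun i => ball S (f i) (x i) (c i), fun i => ?_, ?_⟩
    · rw [hni i]
      exact (mem_nFilter S (f i) (x i) _).2 ⟨c i, hce i, subset_rfl⟩
    · intro y hy
      refine hsub ?_
      have h1 : S.le (g x y) (S.fsum c) := by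
        rw [hgf]
        exact S.fsum_le_fsum hc _ _ fun i => S.le_of_lt' (hy i (Set.mem_univ i))
      exact S.lt_of_le_of_lt' h1 ⟨r, hr, hcr⟩
  · rintro ⟨I, _, t', ht', hsub⟩
    have hmem : ∀ i, ∃ m, m ≠ S.e ∧ ball S (f i) (x i) m ⊆ t' i := by
      intro i
      exact (mem_nFilter S (f i) (x i) _).1 (by rw [← hni i]; exact ht' i)
    choose m hm hball using hmem
    obtain ⟨c, hce, hle⟩ := S.common' n m hm
    refine ⟨c, hce, fun y hy => hsub fun i _ => hball i ?_⟩
    have h1 : S.le (f i (x i) (y i)) (g x y) := by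
      rw [hgf]; exact S.le_fsum hc (fun j => f j (x j) (y j)) i
    exact S.lt_of_lt_of_le' (S.lt_of_le_of_lt' h1 hy) (hle i)
end

section
/- Let M = {0,1,2} with operation max, and let (X,T) be an Alexandrov space, i.e., every point x has a smallest neighbourhood U(x). Define f : X × X → M by f(x,x) = 0, f(x,y) = 1 if y ∈ U(x) and y ≠ x, and f(x,y) = 2 if y ∉ U(x). Then f is a strict quasimetric function (f(x,y) = 0 implies x = y) inducing the topology T. -/
universe u v w

variable {M : Type u} {X : Type v}

def M3 : MVS (Fin 3) where
  add := max
  e := 0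
  assoc := by decide
  add_e := by decide
  e_add := by decide
  eq_e_of_add_eq_e := by decide
  exists_common := by decide
  nontrivial := ⟨1, by decide⟩



lemma fin3_max1 : ∀ a c : Fin 3, c ≠ 0 → max a c = 1 → a = 0 ∨ a = 1 := by decide

lemma fin3_max2 : ∀ a : Fin 3, a = 0 ∨ a = 1 → max a 1 = 1 := by decide

lemma fin3_max3 : ∀ a : Fin 3, max a 2 = 2 := by decide

lemma M3_le_of_le : ∀ a b : Fin 3, a ≤ b → M3.le a b :=
  fun _ b h => ⟨b, max_eq_right h⟩

lemma M3_lt_one : ∀ a : Fin 3, M3.lt a 1 ↔ a = 0 ∨ a = 1 := fun a =>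
  ⟨fun ⟨c, hc, h⟩ => fin3_max1 a c hc h, fun h => ⟨1, by decide, fin3_max2 a h⟩⟩

lemma M3_lt_two : ∀ a : Fin 3, M3.lt a 2 :=
  fun a => ⟨2, by decide, fin3_max3 a⟩

lemma M3_not_two_le_one : ¬ ((2 : Fin 3) ≤ 1) := by decide

lemma fin3_cases : ∀ m : Fin 3, m ≠ 0 → m = 1 ∨ m = 2 := by decide

open Classical in
theorem stmt_8 {X : Type v} [T : TopologicalSpace X] (U : X → Set X)
    (hU : ∀ x : X, U x ∈ nhds x ∧ ∀ V ∈ nhds x, U x ⊆ V) :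
    IsQuasimetric M3
      (fun x y : X => if x = y then (0 : Fin 3) else if y ∈ U x then 1 else 2) ∧
    (∀ x y : X, (if x = y then (0 : Fin 3) else if y ∈ U x then 1 else 2) = 0 → x = y) ∧
    qTopology M3
      (fun x y : X => if x = y then (0 : Fin 3) else if y ∈ U x then 1 else 2) = T := by
  have hxU : ∀ x, x ∈ U x := fun x => mem_of_mem_nhds (hU x).1
  have hopen : ∀ x, IsOpen (U x) := by
    intro x
    have h1 : U x ⊆ interior (U x) := (hU x).2 _ (interior_mem_nhds.mpr (hU x).1)
    rw [Set.Subset.antisymm h1 interior_subset]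
    exact isOpen_interior
  have hmono : ∀ x y, y ∈ U x → U y ⊆ U x := fun x y hy =>
    (hU y).2 _ ((hopen x).mem_nhds hy)
  set f : X → X → Fin 3 := fun x y => if x = y then 0 else if y ∈ U x then 1 else 2 with hf
  have hfone : ∀ {x y : X}, x ≠ y → (1 : Fin 3) ≤ f x y := by
    intro x y hxy
    simp only [hf, if_neg hxy]
    split <;> decide
  have tri : ∀ x y z, f x z ≤ max (f x y) (f y z) := by
    intro x y z
    by_cases hxz : x = z
    · simp [hf, hxz]
    · by_cases hz : z ∈ U x
      · have h1 : f x z = 1 := by simp [hf, hxz, hz]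
        rw [h1]
        by_cases hxy : x = y
        · subst hxy
          exact le_max_of_le_right (hfone hxz)
        · exact le_max_of_le_left (hfone hxy)
      · have h2 : f x z = 2 := by simp [hf, hxz, hz]
        rw [h2]
        by_cases hxy : x = y
        · subst hxy
          have : f x z = 2 := h2
          exact le_max_of_le_right (by rw [this])
        · by_cases hy : y ∈ U x
          · have hyz : y ≠ z := fun h => hz (h ▸ hy)
            have hzy : z ∉ U y := fun h => hz (hmono x y hy h)
            have : f y z = 2 := by simp [hf, hyz, hzy]
            exact le_max_of_le_right (by rw [this])
          · have : f x y = 2 := by simp [hf, hxy, hy]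
            exact le_max_of_le_left (by rw [this])
  refine ⟨⟨fun x y z => M3_le_of_le _ _ (tri x y z), fun x => by simp [hf]; rfl⟩, ?_, ?_⟩
  · intro x y h
    by_contra hxy
    have h' : f x y = 0 := h
    have := hfone hxy
    rw [h'] at this
    exact absurd this (by decide)
  · -- topology
    have hball1 : ∀ x, ball M3 f x 1 = U x := by
      intro x
      ext y
      simp only [ball, Set.mem_setOf_eq, M3_lt_one]
      by_cases hxy : x = y
      · subst hxy
        simp [hf, hxU x]
      · simp only [hf, if_neg hxy]
        by_cases hy : y ∈ U x <;> simp [hy]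
    have hball2 : ∀ x, ball M3 f x 2 = Set.univ := by
      intro x
      ext y
      simp [ball, M3_lt_two]
    have hnhds : ∀ x, nhds x = Filter.principal (U x) := by
      intro x
      apply le_antisymm
      · exact Filter.le_principal_iff.mpr (hU x).1
      · intro V hV
        exact Filter.mem_principal.mpr ((hU x).2 V hV)
    have hN : (fun x => ⨅ m ∈ {m : Fin 3 | m ≠ M3.e}, Filter.principal (ball M3 f x m))
        = fun x => nhds x := by
      funext x
      rw [hnhds x]
      apply le_antisymm
      · exact iInf₂_le_of_le 1 (by decide) (le_of_eq (by rw [hball1]))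
      · refine le_iInf₂ fun m hm => ?_
        rcases fin3_cases m hm with rfl | rfl
        · rw [hball1]
        · rw [hball2]
          simp
    unfold qTopology
    rw [hN]
    refine TopologicalSpace.ext_nhds fun x => ?_
    rw [TopologicalSpace.nhds_mkOfNhds _ _ pure_le_nhds ?_]
    intro a s hs
    exact eventually_eventually_nhds.mpr hs
end

section
/- Let M be an atom-free MVS and f : X × X → M a quasimetric function. Then the closed-ball neighbourhood system x ↦ { B̄_f(x,m) : m ∈ M* }, where B̄_f(x,m) = {y : f(x,y) ⊴ m}, is a neighbourhood system (satisfying (B1) x ∈ U for each U in the system at x; (B2) any two members at x contain a third member at x; (B3) each U at x contains some V at x such that every y ∈ V has a member at y contained in U), and it is equivalent to the open-ball system x ↦ { B_f(x,m) : m ∈ M* }, i.e., each open ball at x contains a closed ball at x and vice versa. -/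
universe u v w

variable {M : Type u} {X : Type v}

lemma MVS.le_trans'_s9 (S : MVS M) {a b c : M} (h1 : S.le a b) (h2 : S.le b c) : S.le a c := by
  obtain ⟨u, hu⟩ := h1; obtain ⟨v, hv⟩ := h2
  exact ⟨S.add u v, by rw [← S.assoc, hu, hv]⟩

lemma MVS.add_le_add'_s9 (S : MVS M) (hc : S.Commutative) {a b c d : M}
    (h1 : S.le a c) (h2 : S.le b d) : S.le (S.add a b) (S.add c d) := by
  obtain ⟨u, hu⟩ := h1; obtain ⟨v, hv⟩ := h2
  refine ⟨S.add u v, ?_⟩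
  rw [S.assoc a b, ← S.assoc b u v, hc b u, S.assoc u b v, hv, ← S.assoc a u d, hu]

theorem stmt_9 (S : MVS M) (hAF : S.AtomFree) (f : X → X → M)
    (hf : IsQuasimetric S f) :
    (∀ (x : X) (m : M), m ≠ S.e → x ∈ closedBall S f x m) ∧
    (∀ (x : X) (m1 m2 : M), m1 ≠ S.e → m2 ≠ S.e →
      ∃ m3, m3 ≠ S.e ∧ closedBall S f x m3 ⊆ closedBall S f x m1 ∩ closedBall S f x m2) ∧
    (∀ (x : X) (m : M), m ≠ S.e → ∃ m', m' ≠ S.e ∧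
      ∀ y ∈ closedBall S f x m', ∃ m'', m'' ≠ S.e ∧
        closedBall S f y m'' ⊆ closedBall S f x m) ∧
    (∀ (x : X) (m : M), m ≠ S.e → ∃ m', m' ≠ S.e ∧ closedBall S f x m' ⊆ ball S f x m) ∧
    (∀ (x : X) (m : M), m ≠ S.e → ∃ m', m' ≠ S.e ∧ ball S f x m' ⊆ closedBall S f x m) := by
  obtain ⟨hcomm, hatom⟩ := hAF
  obtain ⟨htri, hself⟩ := hf
  refine ⟨?_, ?_, ?_, ?_, ?_⟩
  · intro x m _
    exact ⟨m, by rw [hself, S.e_add]⟩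
  · intro x m1 m2 h1 h2
    obtain ⟨c, hc, hc1, hc2⟩ := S.exists_common m1 m2 h1 h2
    exact ⟨c, hc, fun y hy => ⟨S.le_trans'_s9 hy hc1, S.le_trans'_s9 hy hc2⟩⟩
  · intro x m hm
    obtain ⟨n, hn, c, hcne, hcn⟩ := hatom m hm
    refine ⟨n, hn, fun y hy => ⟨c, hcne, fun z hz => ?_⟩⟩
    refine S.le_trans'_s9 (htri x y z) ?_
    refine S.le_trans'_s9 (S.add_le_add'_s9 hcomm hy hz) ⟨S.e, by rw [S.add_e, hcn]⟩
  · intro x m hm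
    obtain ⟨n, hn, c, hcne, hcn⟩ := hatom m hm
    refine ⟨n, hn, fun y hy => ?_⟩
    obtain ⟨d, hd⟩ := hy
    refine ⟨S.add d c, fun h => hcne (S.eq_e_of_add_eq_e _ _ h).2, ?_⟩
    rw [← S.assoc, hd, hcn]
  · intro x m hm
    exact ⟨m, hm, fun y ⟨c, _, hc⟩ => ⟨c, hc⟩⟩
end

section
/- Let M be a commutative MVS and (X,f) a nonempty M-space. Define f* on (X × M) × (X × M) by f*((x,m),(x,m)) = e and f*((x1,m1),(x2,m2)) = m1 + f(x1,x2) + m2 otherwise. Then f* is a quasimetric function, f* is surjective onto M, and f* restricted to X × {e} agrees with f under the identification x ↔ (x,e). Hence every M-space embeds isometrically into an M-full space. -/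
universe u v w

variable {M : Type u} {X : Type v}

open Classical in
theorem stmt_14 (S : MVS M) (hc : S.Commutative) [Nonempty X]
    (f : X → X → M) (hf : IsQuasimetric S f) :
    IsQuasimetric S
      (fun p q : X × M => if p = q then S.e else S.add (S.add p.2 (f p.1 q.1)) q.2) ∧
    Function.Surjective (Function.uncurry
      (fun p q : X × M => if p = q then S.e else S.add (S.add p.2 (f p.1 q.1)) q.2)) ∧
    ∀ x y : X,
      (fun p q : X × M => if p = q then S.e else S.add (S.add p.2 (f p.1 q.1)) q.2)
        (x, S.e) (y, S.e) = f x y := by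
  obtain ⟨htri, hee⟩ := hf
  letI : CommMonoid M :=
    { mul := S.add, one := S.e, mul_assoc := S.assoc, one_mul := S.e_add,
      mul_one := S.add_e, mul_comm := hc }
  have hmul : ∀ a b : M, S.add a b = a * b := fun _ _ => rfl
  have hone : S.e = 1 := rfl
  refine ⟨⟨?_, fun p => by simp⟩, ?_, ?_⟩
  · intro p q r
    dsimp only
    by_cases hpr : p = r
    · subst hpr; simp only [if_pos rfl]
      exact ⟨_, S.e_add _⟩
    by_cases hpq : p = q
    · subst hpq; rw [if_pos rfl, if_neg hpr]
      exact ⟨S.e, by rw [S.add_e, S.e_add]⟩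
    by_cases hqr : q = r
    · subst hqr; rw [if_pos rfl, if_neg hpr]
      exact ⟨S.e, rfl⟩
    rw [if_neg hpr, if_neg hpq, if_neg hqr]
    obtain ⟨c, hcc⟩ := htri p.1 q.1 r.1
    refine ⟨S.add (S.add c q.2) q.2, ?_⟩
    simp only [hmul] at hcc ⊢
    calc p.2 * f p.1 r.1 * r.2 * (c * q.2 * q.2)
        = p.2 * (f p.1 r.1 * c) * (q.2 * q.2 * r.2) := by
          simp [mul_assoc, mul_comm, mul_left_comm]
      _ = p.2 * (f p.1 q.1 * f q.1 r.1) * (q.2 * q.2 * r.2) := by rw [hcc]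
      _ = p.2 * f p.1 q.1 * q.2 * (q.2 * f q.1 r.1 * r.2) := by
          simp [mul_assoc, mul_comm, mul_left_comm]
  · intro m
    by_cases hm : m = S.e
    · exact ⟨((Classical.arbitrary X, S.e), (Classical.arbitrary X, S.e)), by
        simp [Function.uncurry, hm]⟩
    · refine ⟨((Classical.arbitrary X, S.e), (Classical.arbitrary X, m)), ?_⟩
      have h2 : (Classical.arbitrary X, S.e) ≠ (Classical.arbitrary X, m) := by
        simp only [Ne, Prod.mk.injEq, not_and]
        exact fun _ h => hm h.symm
      show (if _ then _ else _) = m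
      rw [if_neg h2, hee, S.add_e, S.e_add]
  · intro x y
    by_cases hxy : x = y
    · subst hxy; simp [hee]
    · have h2 : (x, S.e) ≠ (y, S.e) := by
        simp only [Ne, Prod.mk.injEq, not_and]
        exact fun h => absurd h hxy
      show (if _ then _ else _) = f x y
      rw [if_neg h2, S.e_add, S.add_e]
end

section
/- Let (X, f1) be an M-space with M a commutative MVS. Let X_{f1} ⊆ X × M × M × X consist of tuples (x1,m1,m2,x2) with m1 + m2 = f1(x1,x2). Define f2 on X_{f1} by f2(p,p) = e and f2((x1,m1,m2,x2),(x3,m3,m4,x4)) = m2 + f1(x2,x3) + m3 for distinct tuples. Then f2 is a quasimetric function on X_{f1}, and f2((x,e,e,x),(y,e,e,y)) = f1(x,y) for all x,y ∈ X. -/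
universe u v w

variable {M : Type u} {X : Type v}

open Classical in
theorem stmt_15 (S : MVS M) (hc : S.Commutative) (f1 : X → X → M)
    (hf : IsQuasimetric S f1) :
    IsQuasimetric S
      (fun p q : {p : X × M × M × X // S.add p.2.1 p.2.2.1 = f1 p.1 p.2.2.2} =>
        if p = q then S.e
        else S.add (S.add p.1.2.2.1 (f1 p.1.2.2.2 q.1.1)) q.1.2.1) ∧
    ∀ x y : X,
      (fun p q : {p : X × M × M × X // S.add p.2.1 p.2.2.1 = f1 p.1 p.2.2.2} =>
        if p = q then S.e
        else S.add (S.add p.1.2.2.1 (f1 p.1.2.2.2 q.1.1)) q.1.2.1)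
        ⟨(x, S.e, S.e, x), by rw [hf.2 x]; exact S.add_e S.e⟩
        ⟨(y, S.e, S.e, y), by rw [hf.2 y]; exact S.add_e S.e⟩ = f1 x y := by
  letI : CommMonoid M :=
    { mul := S.add, one := S.e, mul_assoc := S.assoc, one_mul := S.e_add,
      mul_one := S.add_e, mul_comm := hc }
  constructor
  · constructor
    · intro p q r
      by_cases hpq : p = q
      · subst hpq
        simp only [if_pos rfl, if_true]
        rw [S.e_add]
        by_cases hpr : p = r
        · exact ⟨S.e, S.add_e _⟩
        · exact ⟨S.e, S.add_e _⟩
      · by_cases hqr : q = r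
        · subst hqr
          simp only [if_pos rfl, if_neg hpq]
          exact ⟨S.e, rfl⟩
        · by_cases hpr : p = r
          · subst hpr
            simp only [if_pos rfl, if_neg hpq, if_neg hqr]
            exact ⟨_, S.e_add _⟩
          · simp only [if_neg hpq, if_neg hqr, if_neg hpr]
            obtain ⟨c, hc1⟩ := hf.1 p.1.2.2.2 q.1.1 r.1.1
            obtain ⟨d, hd1⟩ := hf.1 q.1.1 q.1.2.2.2 r.1.1
            refine ⟨S.add c d, ?_⟩
            show p.1.2.2.1 * f1 p.1.2.2.2 r.1.1 * r.1.2.1 * (c * d) =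
              p.1.2.2.1 * f1 p.1.2.2.2 q.1.1 * q.1.2.1 *
                (q.1.2.2.1 * f1 q.1.2.2.2 r.1.1 * r.1.2.1)
            have e1 : f1 p.1.2.2.2 r.1.1 * c = f1 p.1.2.2.2 q.1.1 * f1 q.1.1 r.1.1 := hc1
            have e2 : f1 q.1.1 r.1.1 * d = f1 q.1.1 q.1.2.2.2 * f1 q.1.2.2.2 r.1.1 := hd1
            have e3 : q.1.2.1 * q.1.2.2.1 = f1 q.1.1 q.1.2.2.2 := q.2
            have key : f1 p.1.2.2.2 r.1.1 * (c * d) =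
                f1 p.1.2.2.2 q.1.1 * (q.1.2.1 * (q.1.2.2.1 * f1 q.1.2.2.2 r.1.1)) := by
              calc f1 p.1.2.2.2 r.1.1 * (c * d)
                  = f1 p.1.2.2.2 r.1.1 * c * d := (mul_assoc _ _ _).symm
                _ = f1 p.1.2.2.2 q.1.1 * f1 q.1.1 r.1.1 * d := by rw [e1]
                _ = f1 p.1.2.2.2 q.1.1 * (f1 q.1.1 r.1.1 * d) := mul_assoc _ _ _
                _ = f1 p.1.2.2.2 q.1.1 * (f1 q.1.1 q.1.2.2.2 * f1 q.1.2.2.2 r.1.1) := by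
                    rw [e2]
                _ = f1 p.1.2.2.2 q.1.1 * (q.1.2.1 * (q.1.2.2.1 * f1 q.1.2.2.2 r.1.1)) := by
                    rw [← e3, mul_assoc]
            calc p.1.2.2.1 * f1 p.1.2.2.2 r.1.1 * r.1.2.1 * (c * d)
                = p.1.2.2.1 * (f1 p.1.2.2.2 r.1.1 * (c * d)) * r.1.2.1 := by
                  simp only [mul_assoc, mul_comm, mul_left_comm]
              _ = p.1.2.2.1 * (f1 p.1.2.2.2 q.1.1 *
                    (q.1.2.1 * (q.1.2.2.1 * f1 q.1.2.2.2 r.1.1))) * r.1.2.1 := by rw [key]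
              _ = p.1.2.2.1 * f1 p.1.2.2.2 q.1.1 * q.1.2.1 *
                    (q.1.2.2.1 * f1 q.1.2.2.2 r.1.1 * r.1.2.1) := by
                  simp only [mul_assoc, mul_comm, mul_left_comm]
    · intro x
      simp only [if_pos rfl, if_true]
  · intro x y
    by_cases hxy : x = y
    · subst hxy
      simp only [if_pos rfl, if_true, (hf.2 x).symm]
    · show (if _ = _ then S.e else _) = f1 x y
      rw [if_neg (fun h : (⟨(x, S.e, S.e, x), _⟩ :
            {p : X × M × M × X // S.add p.2.1 p.2.2.1 = f1 p.1 p.2.2.2}) = _ =>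
          hxy (congrArg (fun t => t.1.1) h))]
      rw [S.e_add, S.add_e]
end

section
/- Every M-space over a commutative MVS M can be embedded (as a restriction of the quasimetric function) into an M-space that is both M-full (the quasimetric function is surjective) and M-convex (whenever f(x,y) = m2 + m3 there exists z with f(x,z) = m2 and f(z,y) = m3). -/
universe u v w

variable {M : Type u} {X : Type v}

universe u' w'

/-- Points: base points plus formal midpoints. -/
inductive Pt (β : Type w') (α : Type u') : Type (max w' u')
  | base : β → Pt β α
  | mid : Pt β α → Pt β α → α → α → Pt β α

namespace Pt

def depth {β : Type w'} {α : Type u'} : Pt β α → ℕ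
  | base _ => 0
  | mid p q _ _ => max p.depth q.depth + 1

end Pt

open Classical in
noncomputable def pd {β : Type w'} {α : Type u'} [CommMonoid α] (d0 : β → β → α) :
    Pt β α → Pt β α → α
  | .base u, .base v => d0 u v
  | .base u, .mid A B₂ a b =>
      if pd d0 A B₂ = a * b then pd d0 (.base u) A * a else pd d0 (.base u) A
  | .mid C D c d, .base v =>
      if pd d0 C D = c * d then d * pd d0 D (.base v) else pd d0 C (.base v)
  | .mid C D c d, .mid A B₂ a b =>
      if Pt.mid C D c d = Pt.mid A B₂ a b then 1
      else if (Pt.mid C D c d).depth ≤ (Pt.mid A B₂ a b).depth then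
        (if pd d0 A B₂ = a * b then pd d0 (.mid C D c d) A * a else pd d0 (.mid C D c d) A)
      else
        (if pd d0 C D = c * d then d * pd d0 D (.mid A B₂ a b) else pd d0 C (.mid A B₂ a b))
  termination_by p q => (max p.depth q.depth, p.depth + q.depth)
  decreasing_by
    all_goals (simp only [Prod.lex_def, Pt.depth] at *; omega)

section eqs
variable {β : Type w'} {α : Type u'} [CommMonoid α] (d0 : β → β → α)

lemma pd_bb (u v : β) : pd d0 (.base u) (.base v) = d0 u v := by
  rw [pd]

lemma pd_self_mid (C D : Pt β α) (c d : α) :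
    pd d0 (.mid C D c d) (.mid C D c d) = 1 := by
  rw [pd]; simp

lemma pd_peelR_ok {p A B₂ : Pt β α} {a b : α} (hne : p ≠ .mid A B₂ a b)
    (hdep : p.depth ≤ (Pt.mid A B₂ a b).depth) (hok : pd d0 A B₂ = a * b) :
    pd d0 p (.mid A B₂ a b) = pd d0 p A * a := by
  cases p with
  | base u => rw [pd, if_pos hok]
  | mid C D c d => rw [pd, if_neg hne, if_pos hdep, if_pos hok]

lemma pd_peelR_junk {p A B₂ : Pt β α} {a b : α} (hne : p ≠ .mid A B₂ a b)
    (hdep : p.depth ≤ (Pt.mid A B₂ a b).depth) (hok : ¬ pd d0 A B₂ = a * b) :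
    pd d0 p (.mid A B₂ a b) = pd d0 p A := by
  cases p with
  | base u => rw [pd, if_neg hok]
  | mid C D c d => rw [pd, if_neg hne, if_pos hdep, if_neg hok]

lemma pd_peelL_ok {q C D : Pt β α} {c d : α}
    (hdep : q.depth < (Pt.mid C D c d).depth) (hok : pd d0 C D = c * d) :
    pd d0 (.mid C D c d) q = d * pd d0 D q := by
  cases q with
  | base v => rw [pd, if_pos hok]
  | mid A B₂ a b =>
      have hne : Pt.mid C D c d ≠ Pt.mid A B₂ a b := by
        intro h; rw [h] at hdep; omega
      rw [pd, if_neg hne, if_neg (by omega), if_pos hok]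

lemma pd_peelL_junk {q C D : Pt β α} {c d : α}
    (hdep : q.depth < (Pt.mid C D c d).depth) (hok : ¬ pd d0 C D = c * d) :
    pd d0 (.mid C D c d) q = pd d0 C q := by
  cases q with
  | base v => rw [pd, if_neg hok]
  | mid A B₂ a b =>
      have hne : Pt.mid C D c d ≠ Pt.mid A B₂ a b := by
        intro h; rw [h] at hdep; omega
      rw [pd, if_neg hne, if_neg (by omega), if_neg hok]

lemma pd_self (h2 : ∀ u, d0 u u = 1) (p : Pt β α) : pd d0 p p = 1 := by
  cases p with
  | base u => rw [pd_bb]; exact h2 u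
  | mid C D c d => exact pd_self_mid d0 C D c d

end eqs

section tri
variable {β : Type w'} {α : Type u'} [CommMonoid α]

lemma pt_depth_zero {p : Pt β α} (h : p.depth = 0) : ∃ u, p = Pt.base u := by
  cases p with
  | base u => exact ⟨u, rfl⟩
  | mid C D c d => simp [Pt.depth] at h

theorem pd_dvd_triangle (d0 : β → β → α)
    (hd1 : ∀ x y z, d0 x z ∣ d0 x y * d0 y z) (h2 : ∀ x, d0 x x = 1)
    (p q r : Pt β α) : pd d0 p r ∣ pd d0 p q * pd d0 q r := by
  by_cases hpq : p = q
  · subst hpq; rw [pd_self d0 h2, one_mul]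
  by_cases hqr : q = r
  · subst hqr; rw [pd_self d0 h2, mul_one]
  by_cases hpr : p = r
  · subst hpr; rw [pd_self d0 h2]; exact one_dvd _
  by_cases hR : p.depth ≤ r.depth ∧ q.depth ≤ r.depth
  · obtain ⟨h1', h2'⟩ := hR
    cases r with
    | base v =>
        have hp0 : p.depth = 0 := by simpa [Pt.depth] using h1'
        have hq0 : q.depth = 0 := by simpa [Pt.depth] using h2'
        obtain ⟨u, rfl⟩ := pt_depth_zero hp0
        obtain ⟨w, rfl⟩ := pt_depth_zero hq0
        rw [pd_bb, pd_bb, pd_bb]; exact hd1 u w v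
    | mid A' B₂ a' b' =>
        have hA' : A'.depth < (Pt.mid A' B₂ a' b').depth := by simp [Pt.depth] <;> omega
        by_cases hok : pd d0 A' B₂ = a' * b'
        · rw [pd_peelR_ok d0 hpr h1' hok, pd_peelR_ok d0 hqr h2' hok]
          calc pd d0 p A' * a' ∣ (pd d0 p q * pd d0 q A') * a' :=
                mul_dvd_mul_right (pd_dvd_triangle d0 hd1 h2 p q A') a'
            _ = pd d0 p q * (pd d0 q A' * a') := mul_assoc _ _ _
        · rw [pd_peelR_junk d0 hpr h1' hok, pd_peelR_junk d0 hqr h2' hok]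
          exact pd_dvd_triangle d0 hd1 h2 p q A'
  · by_cases hA : p.depth ≤ q.depth
    · have hrq : r.depth < q.depth := by
        by_contra h; push_neg at h; exact hR ⟨le_trans hA h, h⟩
      cases q with
      | base w => simp [Pt.depth] at hrq
      | mid A B₂ a b =>
          have hcomp : A.depth < (Pt.mid A B₂ a b).depth ∧
              B₂.depth < (Pt.mid A B₂ a b).depth := by
            constructor <;> (simp [Pt.depth] <;> omega)
          by_cases hok : pd d0 A B₂ = a * b
          · rw [pd_peelR_ok d0 hpq hA hok, pd_peelL_ok d0 hrq hok]
            have h5 : pd d0 p r ∣ pd d0 p A * (pd d0 A B₂ * pd d0 B₂ r) :=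
              (pd_dvd_triangle d0 hd1 h2 p A r).trans
                (mul_dvd_mul_left _ (pd_dvd_triangle d0 hd1 h2 A B₂ r))
            rw [hok] at h5
            have heq : (pd d0 p A * a) * (b * pd d0 B₂ r)
                = pd d0 p A * (a * b * pd d0 B₂ r) := by
              simp only [mul_assoc]
            rw [heq]; exact h5
          · rw [pd_peelR_junk d0 hpq hA hok, pd_peelL_junk d0 hrq hok]
            exact pd_dvd_triangle d0 hd1 h2 p A r
    · push_neg at hA
      have hrp : r.depth < p.depth := by
        by_contra h; push_neg at h; exact hR ⟨h, le_trans (le_of_lt hA) h⟩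
      cases p with
      | base u => simp [Pt.depth] at hA
      | mid C D c d =>
          have hcomp : C.depth < (Pt.mid C D c d).depth ∧
              D.depth < (Pt.mid C D c d).depth := by
            constructor <;> (simp [Pt.depth] <;> omega)
          by_cases hok : pd d0 C D = c * d
          · rw [pd_peelL_ok d0 hrp hok, pd_peelL_ok d0 hA hok]
            calc d * pd d0 D r ∣ d * (pd d0 D q * pd d0 q r) :=
                  mul_dvd_mul_left d (pd_dvd_triangle d0 hd1 h2 D q r)
              _ = (d * pd d0 D q) * pd d0 q r := (mul_assoc _ _ _).symm
          · rw [pd_peelL_junk d0 hrp hok, pd_peelL_junk d0 hA hok]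
            exact pd_dvd_triangle d0 hd1 h2 C q r
  termination_by (max p.depth (max q.depth r.depth), p.depth + q.depth + r.depth)
  decreasing_by
    all_goals (simp only [Prod.lex_def, Pt.depth] at *; omega)

end tri

section midpt
variable {β : Type w'} {α : Type u'} [CommMonoid α] (d0 : β → β → α)

lemma pd_to_mid (h2 : ∀ u, d0 u u = 1) {p r : Pt β α} {m2 m3 : α}
    (h : pd d0 p r = m2 * m3) : pd d0 p (.mid p r m2 m3) = m2 := by
  have hne : p ≠ Pt.mid p r m2 m3 := by
    intro h'
    have := congrArg Pt.depth h'
    simp only [Pt.depth] at this; omega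
  have hdep : p.depth ≤ (Pt.mid p r m2 m3).depth := by simp [Pt.depth]; omega
  rw [pd_peelR_ok d0 hne hdep h, pd_self d0 h2, one_mul]

lemma pd_from_mid (h2 : ∀ u, d0 u u = 1) {p r : Pt β α} {m2 m3 : α}
    (h : pd d0 p r = m2 * m3) : pd d0 (.mid p r m2 m3) r = m3 := by
  have hdep : r.depth < (Pt.mid p r m2 m3).depth := by simp [Pt.depth] <;> omega
  rw [pd_peelL_ok d0 hdep h, pd_self d0 h2, mul_one]

end midpt

section basespace
variable {α : Type u'} {X : Type w'} [CommMonoid α]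

/-- The anchor point: any element of `X`, chosen consistently. -/
noncomputable def anchorPt {X : Type w'} (x : X) : X := Classical.choice ⟨x⟩

lemma anchorPt_eq (x y : X) : anchorPt x = anchorPt y := rfl

open Classical in
/-- Base quasimetric on `X ⊕ α`: `f` on `X`, a "full gadget" on `α`, glued at an anchor. -/
noncomputable def baseD (f : X → X → α) : X ⊕ α → X ⊕ α → α
  | .inl x, .inl y => f x y
  | .inl x, .inr b => f x (anchorPt x) * b
  | .inr _, .inl y => f (anchorPt y) y
  | .inr a, .inr b => if a = b then 1 else b

lemma baseD_self (f : X → X → α) (hself : ∀ x, f x x = 1) :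
    ∀ p, baseD f p p = 1
  | .inl x => hself x
  | .inr a => if_pos rfl

lemma baseD_tri (f : X → X → α) (htri : ∀ x y z, f x z ∣ f x y * f y z) :
    ∀ p q r, baseD f p r ∣ baseD f p q * baseD f q r := by
  classical
  intro p q r
  cases p with
  | inl x =>
    cases q with
    | inl y =>
      cases r with
      | inl z => exact htri x y z
      | inr b =>
        show f x (anchorPt x) * b ∣ f x y * (f y (anchorPt y) * b)
        rw [anchorPt_eq y x, ← mul_assoc]
        exact mul_dvd_mul_right (htri x y (anchorPt x)) b
    | inr a =>
      cases r with
      | inl z =>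
        show f x z ∣ (f x (anchorPt x) * a) * f (anchorPt z) z
        rw [anchorPt_eq z x, mul_right_comm]
        exact (htri x (anchorPt x) z).trans (dvd_mul_right _ a)
      | inr b =>
        show f x (anchorPt x) * b ∣ (f x (anchorPt x) * a) * (if a = b then 1 else b)
        by_cases hab : a = b
        · subst hab; rw [if_pos rfl, mul_one]
        · rw [if_neg hab]
          exact mul_dvd_mul (dvd_mul_right _ a) dvd_rfl
  | inr a =>
    cases q with
    | inl x =>
      cases r with
      | inl y =>
        show f (anchorPt y) y ∣ f (anchorPt x) x * f x y
        rw [anchorPt_eq x y]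
        exact htri (anchorPt y) x y
      | inr b =>
        show (if a = b then 1 else b) ∣ f (anchorPt x) x * (f x (anchorPt x) * b)
        by_cases hab : a = b
        · rw [if_pos hab]; exact one_dvd _
        · rw [if_neg hab]
          exact (dvd_mul_left b (f x (anchorPt x))).trans (dvd_mul_left _ _)
    | inr b =>
      cases r with
      | inl y =>
        show f (anchorPt y) y ∣ (if a = b then 1 else b) * f (anchorPt y) y
        exact dvd_mul_left _ _
      | inr c' =>
        show (if a = c' then 1 else c') ∣ (if a = b then 1 else b) * (if b = c' then 1 else c')
        by_cases hac : a = c'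
        · rw [if_pos hac]; exact one_dvd _
        · rw [if_neg hac]
          by_cases hbc : b = c'
          · subst hbc
            rw [if_pos rfl, mul_one, if_neg hac]
          · rw [if_neg hbc]; exact dvd_mul_left _ _

end basespace

theorem stmt_16 (S : MVS M) (hc : S.Commutative) (f : X → X → M)
    (hf : IsQuasimetric S f) :
    ∃ (Y : Type (max u v)) (g : Y → Y → M) (i : X → Y),
      IsQuasimetric S g ∧
      Function.Injective i ∧
      (∀ x x' : X, g (i x) (i x') = f x x') ∧
      Function.Surjective (Function.uncurry g) ∧
      (∀ (m2 m3 : M) (x y : Y), g x y = S.add m2 m3 →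
        ∃ z, g x z = m2 ∧ g z y = m3) := by
  letI : CommMonoid M :=
    { mul := S.add, mul_assoc := S.assoc, one := S.e, one_mul := S.e_add,
      mul_one := S.add_e, mul_comm := hc }
  have hftri : ∀ x y z, f x z ∣ f x y * f y z := fun x y z => by
    obtain ⟨c, h⟩ := hf.1 x y z; exact ⟨c, h.symm⟩
  have hfself : ∀ x, f x x = (1 : M) := hf.2
  have hbs := baseD_self f hfself
  have hbt := baseD_tri f hftri
  refine ⟨Pt (X ⊕ M) M, pd (baseD f), fun x => .base (.inl x), ⟨?_, ?_⟩, ?_, ?_, ?_, ?_⟩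
  · intro x y z
    obtain ⟨c, hcv⟩ := pd_dvd_triangle (baseD f) hbt hbs x y z
    exact ⟨c, hcv.symm⟩
  · exact pd_self (baseD f) hbs
  · intro x x' h
    injection h with h'
    injection h' with h''
  · intro x x'
    rw [pd_bb]
    rfl
  · intro m
    classical
    refine ⟨(Pt.base (Sum.inr 1), Pt.base (Sum.inr m)), ?_⟩
    show pd (baseD f) (Pt.base (Sum.inr 1)) (Pt.base (Sum.inr m)) = m
    rw [pd_bb]
    show (if (1 : M) = m then 1 else m) = m
    split
    · assumption
    · rfl
  · intro m2 m3 x y hxy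
    exact ⟨.mid x y m2 m3, pd_to_mid (baseD f) hbs hxy, pd_from_mid (baseD f) hbs hxy⟩
end
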